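/- Let 0 < r < 1 and let (T₁,…,T_d) be a tuple of invertible bounded operators on a complex Hilbert space H. Then (T₁,…,T_d) is a doubly commuting tuple of operators in C_{1,r} if and only if there exist a tuple (U₁,…,U_d) of commuting unitary operators on H and a tuple (D₁,…,D_d) of commuting self-adjoint invertible operators on H with spectrum σ(D_j) ⊆ { z ∈ ℂ : r ≤ |z| ≤ 1 } for each j, such that D_iU_j = U_jD_i for all i ≠ j and T_j = U_jD_j for each j = 1,…,d. -/

import Mathlib

open ContinuousLinearMap

variable {H : Type*} [NormedAddCommGroup H] [InnerProductSpace ℂ H] [CompleteSpace H]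

/-- If `b` commutes with a selfadjoint `a`, it commutes with `cfc f a`. -/
lemma my_commute_cfc {a b : H →L[ℂ] H} (ha : IsSelfAdjoint a) (hab : Commute a b)
    (f : ℝ → ℝ) : Commute (cfc f a) b := by
  by_cases hf : ContinuousOn f (spectrum ℝ a)
  · rw [cfc_apply f a ha hf]
    set S : Subalgebra ℝ C(spectrum ℝ a, ℝ) :=
      (Subalgebra.centralizer ℝ {b}).comap (cfcHom ha (R := ℝ)).toAlgHom with hS_def
    have hcen : ((Subalgebra.centralizer ℝ {b} : Subalgebra ℝ (H →L[ℂ] H)) : Set (H →L[ℂ] H))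
        = {x | b * x = x * b} := by
      ext x
      simp [Subalgebra.mem_centralizer_iff, Set.mem_centralizer_iff, eq_comm]
    have hS_closed : IsClosed (S : Set C(spectrum ℝ a, ℝ)) := by
      have h1 : IsClosed ((Subalgebra.centralizer ℝ {b} : Subalgebra ℝ (H →L[ℂ] H)) :
          Set (H →L[ℂ] H)) := by
        rw [hcen]
        exact isClosed_eq (continuous_const.mul continuous_id) (continuous_id.mul continuous_const)
      exact h1.preimage (cfcHom_continuous ha)
    have hle : polynomialFunctions (spectrum ℝ a) ≤ S := by
      rw [polynomialFunctions.eq_adjoin_X]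
      apply Algebra.adjoin_le
      rintro g hg
      rw [Set.mem_singleton_iff] at hg
      subst hg
      show cfcHom ha _ ∈ Subalgebra.centralizer ℝ {b}
      rw [Subalgebra.mem_centralizer_iff]
      rintro y hy
      rw [Set.mem_singleton_iff] at hy
      subst hy
      have hX : (Polynomial.toContinuousMapOnAlgHom (spectrum ℝ a)) Polynomial.X
          = (ContinuousMap.id ℝ).restrict (spectrum ℝ a) := by
        ext x; simp
      rw [hX, cfcHom_id ha]
      exact hab.symm.eq
    have h2 : (⊤ : Subalgebra ℝ C(spectrum ℝ a, ℝ)) ≤ S := by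
      rw [← polynomialFunctions.topologicalClosure (spectrum ℝ a)]
      exact Subalgebra.topologicalClosure_minimal hle hS_closed
    have hmem := h2 (Algebra.mem_top (x := ⟨_, hf.restrict⟩))
    rw [hS_def, Subalgebra.mem_comap, Subalgebra.mem_centralizer_iff] at hmem
    exact (hmem b rfl).symm
  · rw [cfc_apply_of_not_continuousOn a hf]
    exact Commute.zero_left b

/-- Commuting with a unit gives commuting with its `Ring.inverse`. -/
lemma my_commute_inverse {a b : H →L[ℂ] H} (h : Commute a b) (hb : IsUnit b) :
    Commute a (Ring.inverse b) := by
  have h1 : Ring.inverse b * b = 1 := Ring.inverse_mul_cancel b hb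
  have h2 : b * Ring.inverse b = 1 := Ring.mul_inverse_cancel b hb
  show a * Ring.inverse b = Ring.inverse b * a
  calc a * Ring.inverse b = Ring.inverse b * (b * a) * Ring.inverse b := by
        rw [← mul_assoc, h1, one_mul]
    _ = Ring.inverse b * (a * b) * Ring.inverse b := by rw [h.eq]
    _ = Ring.inverse b * a := by rw [mul_assoc, mul_assoc, h2, mul_one]

/-- Commuting with a unitary gives commuting with its star. -/
lemma my_commute_star_unitary {u x : H →L[ℂ] H} (hu : u ∈ unitary (H →L[ℂ] H))
    (h : Commute x u) : Commute x (star u) := by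
  have h1 : star u * u = 1 := Unitary.star_mul_self_of_mem hu
  have h2 : u * star u = 1 := Unitary.mul_star_self_of_mem hu
  show x * star u = star u * x
  calc x * star u = star u * (u * x) * star u := by
        rw [← mul_assoc, h1, one_mul]
    _ = star u * (x * u) * star u := by rw [h.eq]
    _ = star u * x := by rw [mul_assoc, mul_assoc, h2, mul_one]

/-- norm bound from spectrum for selfadjoint elements. -/
lemma my_norm_le_of_spectrum {a : H →L[ℂ] H} (ha : IsSelfAdjoint a) {c : NNReal}
    (h : ∀ z ∈ spectrum ℂ a, ‖z‖₊ ≤ c) : ‖a‖ ≤ c := by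
  have h1 := ha.spectralRadius_eq_nnnorm
  have h2 : spectralRadius ℂ a ≤ (c : ENNReal) := by
    rw [spectralRadius]
    exact iSup₂_le fun z hz => ENNReal.coe_le_coe.mpr (h z hz)
  rw [h1, ENNReal.coe_le_coe] at h2
  exact_mod_cast h2

lemma my_ring_inverse_eq {a x : H →L[ℂ] H} (ha : IsUnit a) (h : a * x = 1) :
    Ring.inverse a = x := by
  have h1 : Ring.inverse a * a = 1 := Ring.inverse_mul_cancel a ha
  calc Ring.inverse a = Ring.inverse a * (a * x) := by rw [h, mul_one]
    _ = x := by rw [← mul_assoc, h1, one_mul]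


lemma my_inv_mem_spectrum {𝕜 : Type*} [Field 𝕜] {A : Type*} [Ring A] [Algebra 𝕜 A]
    {a : A} (ha : IsUnit a) {t : 𝕜} (ht : t ≠ 0) (h : t ∈ spectrum 𝕜 a) :
    t⁻¹ ∈ spectrum 𝕜 (Ring.inverse a) := by
  obtain ⟨u, rfl⟩ := ha
  rw [Ring.inverse_unit]
  have := spectrum.inv_mem_iff (R := 𝕜) (A := A) (r := Units.mk0 t ht) (a := u)
  simpa using this.mp (by simpa using h)

noncomputable def myD (T : H →L[ℂ] H) : H →L[ℂ] H := cfc Real.sqrt (star T * T)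

lemma myD_sa (T : H →L[ℂ] H) : IsSelfAdjoint (myD T) := cfc_predicate _ _

lemma myD_mul_self (T : H →L[ℂ] H) : myD T * myD T = star T * T := by
  rw [myD, ← cfc_mul _ _ (star T * T)]
  have h := cfc_congr (a := star T * T) (f := fun x : ℝ => Real.sqrt x * Real.sqrt x) (g := id)
    (fun x hx => Real.mul_self_sqrt (spectrum_nonneg_of_nonneg (star_mul_self_nonneg T) hx))
  rw [h, cfc_id ℝ (star T * T)]

lemma myD_commute {T x : H →L[ℂ] H} (h : Commute (star T * T) x) : Commute (myD T) x :=
  my_commute_cfc (IsSelfAdjoint.star_mul_self T) h _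

lemma my_a_unit {T : H →L[ℂ] H} (hu : IsUnit T) : IsUnit (star T * T) := hu.star.mul hu

lemma my_a_inv_eq {T : H →L[ℂ] H} (hu : IsUnit T) :
    Ring.inverse (star T * T) = Ring.inverse T * star (Ring.inverse T) := by
  apply my_ring_inverse_eq (my_a_unit hu)
  have e1 : T * Ring.inverse T = 1 := Ring.mul_inverse_cancel _ hu
  have e2 : Ring.inverse T * T = 1 := Ring.inverse_mul_cancel _ hu
  have e3 : star T * star (Ring.inverse T) = 1 := by
    rw [← star_mul, e2, star_one]
  calc star T * T * (Ring.inverse T * star (Ring.inverse T))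
      = star T * (T * (Ring.inverse T * star (Ring.inverse T))) := by rw [mul_assoc]
    _ = star T * (T * Ring.inverse T * star (Ring.inverse T)) := by rw [← mul_assoc T _ _]
    _ = star T * star (Ring.inverse T) := by rw [e1, one_mul]
    _ = 1 := e3

lemma myD_spec [Nontrivial H] {r : ℝ} (hr0 : 0 < r) {T : H →L[ℂ] H} (hu : IsUnit T)
    (hn : ‖T‖ ≤ 1) (hi : ‖Ring.inverse T‖ ≤ r⁻¹) :
    spectrum ℝ (myD T) ⊆ Set.Icc r 1 := by
  have hanorm : ‖star T * T‖ ≤ 1 := by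
    rw [CStarRing.norm_star_mul_self]
    exact mul_le_one₀ hn (norm_nonneg _) hn
  have hainv : ‖Ring.inverse (star T * T)‖ ≤ (r ^ 2)⁻¹ := by
    rw [my_a_inv_eq hu, CStarRing.norm_self_mul_star]
    have h0 : (0:ℝ) ≤ r⁻¹ := by positivity
    calc ‖Ring.inverse T‖ * ‖Ring.inverse T‖ ≤ r⁻¹ * r⁻¹ :=
          mul_le_mul hi hi (norm_nonneg _) h0
      _ = (r ^ 2)⁻¹ := by rw [sq, mul_inv]
  have hspec_a : spectrum ℝ (star T * T) ⊆ Set.Icc (r ^ 2) 1 := by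
    intro t ht
    have ht0 : 0 ≤ t := spectrum_nonneg_of_nonneg (star_mul_self_nonneg T) ht
    constructor
    · have htne : t ≠ 0 := fun h0 => spectrum.zero_notMem ℝ (my_a_unit hu) (h0 ▸ ht)
      have htpos : 0 < t := lt_of_le_of_ne ht0 (Ne.symm htne)
      have hmem := my_inv_mem_spectrum (my_a_unit hu) htne ht
      have h1 := spectrum.norm_le_norm_of_mem hmem
      rw [Real.norm_eq_abs, abs_of_nonneg (inv_nonneg.mpr ht0)] at h1
      have h2 := h1.trans hainv
      have hr2 : (0:ℝ) < r ^ 2 := by positivity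
      exact (inv_le_inv₀ htpos hr2).mp h2
    · have h1 := spectrum.norm_le_norm_of_mem ht
      rw [Real.norm_eq_abs, abs_of_nonneg ht0] at h1
      exact h1.trans hanorm
  intro t ht
  rw [myD, cfc_map_spectrum Real.sqrt (star T * T)] at ht
  obtain ⟨s, hs, rfl⟩ := ht
  obtain ⟨hs1, hs2⟩ := hspec_a hs
  constructor
  · have : r = Real.sqrt (r ^ 2) := (Real.sqrt_sq hr0.le).symm
    rw [this]
    exact Real.sqrt_le_sqrt hs1
  · calc Real.sqrt s ≤ Real.sqrt 1 := Real.sqrt_le_sqrt hs2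
      _ = 1 := Real.sqrt_one

lemma myD_unit [Nontrivial H] {r : ℝ} (hr0 : 0 < r) {T : H →L[ℂ] H} (hu : IsUnit T)
    (hn : ‖T‖ ≤ 1) (hi : ‖Ring.inverse T‖ ≤ r⁻¹) : IsUnit (myD T) := by
  apply spectrum.isUnit_of_zero_notMem ℝ
  intro h0
  have := (myD_spec hr0 hu hn hi h0).1
  linarith

lemma myD_specC [Nontrivial H] {r : ℝ} (hr0 : 0 < r) {T : H →L[ℂ] H} (hu : IsUnit T)
    (hn : ‖T‖ ≤ 1) (hi : ‖Ring.inverse T‖ ≤ r⁻¹) :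
    spectrum ℂ (myD T) ⊆ {z : ℂ | r ≤ ‖z‖ ∧ ‖z‖ ≤ 1} := by
  intro z hz
  have hre := (myD_sa T).mem_spectrum_eq_re hz
  have hz' : (z.re : ℂ) ∈ spectrum ℂ (myD T) := hre ▸ hz
  have hmem : z.re ∈ spectrum ℝ (myD T) := by
    have := spectrum.algebraMap_mem_iff (R := ℝ) (S := ℂ) (a := myD T) (r := z.re)
    exact this.mp (by simpa using hz')
  obtain ⟨h1, h2⟩ := myD_spec hr0 hu hn hi hmem
  have habs : ‖z‖ = |z.re| := by
    rw [hre, Complex.norm_real, Real.norm_eq_abs, Complex.ofReal_re]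
  rw [Set.mem_setOf_eq, habs, abs_of_nonneg (hr0.le.trans h1)]
  exact ⟨h1, h2⟩
lemma myU_unitary [Nontrivial H] {r : ℝ} (hr0 : 0 < r) {T : H →L[ℂ] H} (hu : IsUnit T)
    (hn : ‖T‖ ≤ 1) (hi : ‖Ring.inverse T‖ ≤ r⁻¹) :
    T * Ring.inverse (myD T) ∈ unitary (H →L[ℂ] H) := by
  have hDu := myD_unit hr0 hu hn hi
  have e1 : Ring.inverse (myD T) * myD T = 1 := Ring.inverse_mul_cancel _ hDu
  have e2 : myD T * Ring.inverse (myD T) = 1 := Ring.mul_inverse_cancel _ hDu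
  have hsinv : star (Ring.inverse (myD T)) = Ring.inverse (myD T) := by
    rw [← Ring.inverse_star, (myD_sa T).star_eq]
  rw [Unitary.mem_iff]
  constructor
  · rw [star_mul, hsinv]
    calc Ring.inverse (myD T) * star T * (T * Ring.inverse (myD T))
        = Ring.inverse (myD T) * (star T * (T * Ring.inverse (myD T))) := by rw [mul_assoc]
      _ = Ring.inverse (myD T) * (star T * T * Ring.inverse (myD T)) := by
          rw [← mul_assoc (star T)]
      _ = Ring.inverse (myD T) * (myD T * myD T * Ring.inverse (myD T)) := by
          rw [myD_mul_self]
      _ = Ring.inverse (myD T) * (myD T * (myD T * Ring.inverse (myD T))) := by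
          rw [mul_assoc (myD T)]
      _ = Ring.inverse (myD T) * myD T := by rw [e2, mul_one]
      _ = 1 := e1
  · rw [star_mul, hsinv]
    have hx : Ring.inverse (myD T) * Ring.inverse (myD T) = Ring.inverse (star T * T) := by
      symm
      apply my_ring_inverse_eq (my_a_unit hu)
      rw [← myD_mul_self]
      calc myD T * myD T * (Ring.inverse (myD T) * Ring.inverse (myD T))
          = myD T * (myD T * (Ring.inverse (myD T) * Ring.inverse (myD T))) := by rw [mul_assoc]
        _ = myD T * (myD T * Ring.inverse (myD T) * Ring.inverse (myD T)) := by
            rw [← mul_assoc (myD T) (Ring.inverse (myD T)) (Ring.inverse (myD T))]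
        _ = 1 := by rw [e2, one_mul, e2]
    calc T * Ring.inverse (myD T) * (Ring.inverse (myD T) * star T)
        = T * (Ring.inverse (myD T) * (Ring.inverse (myD T) * star T)) := by rw [mul_assoc]
      _ = T * (Ring.inverse (myD T) * Ring.inverse (myD T) * star T) := by
          rw [← mul_assoc (Ring.inverse (myD T))]
      _ = T * (Ring.inverse (star T * T) * star T) := by rw [hx]
      _ = T * (Ring.inverse T * star (Ring.inverse T) * star T) := by rw [my_a_inv_eq hu]
      _ = T * (Ring.inverse T * (star (Ring.inverse T) * star T)) := by
          rw [mul_assoc (Ring.inverse T)]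
      _ = T * (Ring.inverse T * star (T * Ring.inverse T)) := by rw [← star_mul]
      _ = 1 := by
          rw [Ring.mul_inverse_cancel _ hu, star_one, mul_one]
          exact Ring.mul_inverse_cancel _ hu

lemma myT_eq [Nontrivial H] {r : ℝ} (hr0 : 0 < r) {T : H →L[ℂ] H} (hu : IsUnit T)
    (hn : ‖T‖ ≤ 1) (hi : ‖Ring.inverse T‖ ≤ r⁻¹) :
    T = T * Ring.inverse (myD T) * myD T := by
  rw [mul_assoc, Ring.inverse_mul_cancel _ (myD_unit hr0 hu hn hi), mul_one]

lemma my_D_norm {r : ℝ} {D : H →L[ℂ] H} (hsa : IsSelfAdjoint D)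
    (hs : spectrum ℂ D ⊆ {z : ℂ | r ≤ ‖z‖ ∧ ‖z‖ ≤ 1}) : ‖D‖ ≤ 1 := by
  have h := my_norm_le_of_spectrum hsa (c := 1) (fun z hz => by
    rw [← NNReal.coe_le_coe, coe_nnnorm, NNReal.coe_one]
    exact (hs hz).2)
  simpa using h

lemma my_Dinv_norm {r : ℝ} (hr0 : 0 < r) {D : H →L[ℂ] H} (hsa : IsSelfAdjoint D)
    (hDu : IsUnit D) (hs : spectrum ℂ D ⊆ {z : ℂ | r ≤ ‖z‖ ∧ ‖z‖ ≤ 1}) :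
    ‖Ring.inverse D‖ ≤ r⁻¹ := by
  have hinv_sa : IsSelfAdjoint (Ring.inverse D) := by
    show star _ = _
    rw [← Ring.inverse_star, hsa.star_eq]
  have hiu : IsUnit (Ring.inverse D) := isUnit_ringInverse.mpr hDu
  have key : ∀ z ∈ spectrum ℂ (Ring.inverse D), ‖z‖₊ ≤ Real.toNNReal r⁻¹ := by
    intro z hz
    have hzne : z ≠ 0 := fun h0 => spectrum.zero_notMem ℂ hiu (h0 ▸ hz)
    have hmem := my_inv_mem_spectrum hiu hzne hz
    have hDDi : Ring.inverse (Ring.inverse D) = D := by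
      obtain ⟨u, rfl⟩ := hDu
      rw [Ring.inverse_unit, Ring.inverse_unit, inv_inv]
    rw [hDDi] at hmem
    have h1 := (hs hmem).1
    rw [norm_inv] at h1
    have habs : ‖z‖ ≤ r⁻¹ := by
      have h2 := inv_anti₀ hr0 h1
      rwa [inv_inv] at h2
    rw [← NNReal.coe_le_coe, coe_nnnorm, Real.coe_toNNReal _ (by positivity)]
    exact habs
  have h := my_norm_le_of_spectrum hinv_sa key
  rwa [Real.coe_toNNReal _ (by positivity)] at h
/-- `T ∈ C_{1,r}`: `T` is invertible, `‖T‖ ≤ 1` and `‖r • T⁻¹‖ ≤ 1`. -/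
def MemC1r (r : ℝ) (T : H →L[ℂ] H) : Prop :=
  IsUnit T ∧ ‖T‖ ≤ 1 ∧ ‖(r : ℂ) • Ring.inverse T‖ ≤ 1

/-- `T ∈ QA_r`: `T` is invertible, `‖r • T‖ ≤ 1` and `‖r • T⁻¹‖ ≤ 1`. -/
def MemQA (r : ℝ) (T : H →L[ℂ] H) : Prop :=
  IsUnit T ∧ ‖(r : ℂ) • T‖ ≤ 1 ∧ ‖(r : ℂ) • Ring.inverse T‖ ≤ 1

/-- A tuple of operators is doubly commuting if `TᵢTⱼ = TⱼTᵢ` and `TᵢTⱼ* = Tⱼ*Tᵢ` for `i ≠ j`. -/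
def DoublyCommuting {d : ℕ} (T : Fin d → H →L[ℂ] H) : Prop :=
  ∀ i j, i ≠ j → T i * T j = T j * T i ∧ T i * adjoint (T j) = adjoint (T j) * T i

theorem stmt17 (r : ℝ) (hr0 : 0 < r) (hr1 : r < 1) (d : ℕ) (T : Fin d → H →L[ℂ] H)
    (hu : ∀ i, IsUnit (T i)) :
    (DoublyCommuting T ∧ ∀ i, MemC1r r (T i)) ↔
      ∃ U D : Fin d → H →L[ℂ] H,
        (∀ i, U i ∈ unitary (H →L[ℂ] H)) ∧
        (∀ i j, U i * U j = U j * U i) ∧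
        (∀ i, IsSelfAdjoint (D i)) ∧ (∀ i, IsUnit (D i)) ∧
        (∀ i j, D i * D j = D j * D i) ∧
        (∀ j, spectrum ℂ (D j) ⊆ {z : ℂ | r ≤ ‖z‖ ∧ ‖z‖ ≤ 1}) ∧
        (∀ i j, i ≠ j → D i * U j = U j * D i) ∧
        (∀ j, T j = U j * D j) := by
  rcases subsingleton_or_nontrivial H with hsub | hnt
  · have hS : Subsingleton (H →L[ℂ] H) :=
      ⟨fun x y => ContinuousLinearMap.ext fun v => Subsingleton.elim _ _⟩
    constructor
    · rintro ⟨-, -⟩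
      refine ⟨fun _ => 1, fun _ => 1, fun i => one_mem _, fun i j => rfl,
        fun i => IsSelfAdjoint.one _, fun i => isUnit_one, fun i j => rfl,
        fun j z hz => absurd (isUnit_of_subsingleton _) (spectrum.mem_iff.mp hz),
        fun i j _ => rfl, fun j => Subsingleton.elim _ _⟩
    · rintro -
      refine ⟨fun i j hij => ⟨Subsingleton.elim _ _, Subsingleton.elim _ _⟩,
        fun i => ⟨hu i, ?_, ?_⟩⟩
      · rw [Subsingleton.elim (T i) 0, norm_zero]
        exact zero_le_one
      · rw [Subsingleton.elim ((r : ℂ) • Ring.inverse (T i)) 0, norm_zero]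
        exact zero_le_one
  · constructor
    · rintro ⟨hdc, hC⟩
      have hTn : ∀ j, ‖T j‖ ≤ 1 := fun j => (hC j).2.1
      have hTi : ∀ j, ‖Ring.inverse (T j)‖ ≤ r⁻¹ := by
        intro j
        have h := (hC j).2.2
        rw [norm_smul, Complex.norm_real, Real.norm_eq_abs, abs_of_pos hr0] at h
        calc ‖Ring.inverse (T j)‖ = r⁻¹ * (r * ‖Ring.inverse (T j)‖) := by
              field_simp
          _ ≤ r⁻¹ * 1 := mul_le_mul_of_nonneg_left h (by positivity)
          _ = r⁻¹ := mul_one _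
      have hDu : ∀ j, IsUnit (myD (T j)) := fun j => myD_unit hr0 (hu j) (hTn j) (hTi j)
      -- commutation facts
      have cT : ∀ i j, i ≠ j → Commute (T i) (T j) := fun i j h => (hdc i j h).1
      have cTs : ∀ i j, i ≠ j → Commute (T i) (star (T j)) := fun i j h => by
        have h2 := (hdc i j h).2
        rwa [← ContinuousLinearMap.star_eq_adjoint] at h2
      have csT : ∀ i j, i ≠ j → Commute (star (T i)) (T j) := fun i j h => (cTs j i h.symm).symm
      have css : ∀ i j, i ≠ j → Commute (star (T i)) (star (T j)) := fun i j h => by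
        show star (T i) * star (T j) = star (T j) * star (T i)
        rw [← star_mul, ← star_mul, (cT j i h.symm).eq]
      have caT : ∀ i j, i ≠ j → Commute (star (T i) * T i) (T j) :=
        fun i j h => (csT i j h).mul_left (cT i j h)
      have caTs : ∀ i j, i ≠ j → Commute (star (T i) * T i) (star (T j)) :=
        fun i j h => (css i j h).mul_left (cTs i j h)
      have cDT : ∀ i j, i ≠ j → Commute (myD (T i)) (T j) :=
        fun i j h => myD_commute (caT i j h)
      have cDTs : ∀ i j, i ≠ j → Commute (myD (T i)) (star (T j)) :=
        fun i j h => myD_commute (caTs i j h)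
      have cDa : ∀ i j, i ≠ j → Commute (myD (T i)) (star (T j) * T j) :=
        fun i j h => (cDTs i j h).mul_right (cDT i j h)
      have cDD : ∀ i j, Commute (myD (T i)) (myD (T j)) := by
        intro i j
        rcases eq_or_ne i j with rfl | h
        · exact Commute.refl _
        · exact (myD_commute (cDa i j h).symm).symm
      have cDDi : ∀ i j, i ≠ j → Commute (myD (T i)) (Ring.inverse (myD (T j))) :=
        fun i j h => my_commute_inverse (cDD i j) (hDu j)
      have cTD : ∀ i j, i ≠ j → Commute (T i) (myD (T j)) :=
        fun i j h => (cDT j i h.symm).symm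
      have cTDi : ∀ i j, i ≠ j → Commute (T i) (Ring.inverse (myD (T j))) :=
        fun i j h => my_commute_inverse (cTD i j h) (hDu j)
      have ciT : ∀ i j, i ≠ j → Commute (Ring.inverse (myD (T i))) (T j) :=
        fun i j h => (my_commute_inverse (cDT i j h).symm (hDu i)).symm
      have cii : ∀ i j, i ≠ j →
          Commute (Ring.inverse (myD (T i))) (Ring.inverse (myD (T j))) := fun i j h =>
        my_commute_inverse ((my_commute_inverse (cDD i j).symm (hDu i)).symm) (hDu j)
      refine ⟨fun j => T j * Ring.inverse (myD (T j)), fun j => myD (T j),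
        fun j => myU_unitary hr0 (hu j) (hTn j) (hTi j), ?_, fun j => myD_sa (T j),
        hDu, fun i j => (cDD i j).eq,
        fun j => myD_specC hr0 (hu j) (hTn j) (hTi j), ?_, ?_⟩
      · intro i j
        rcases eq_or_ne i j with rfl | h
        · rfl
        · have h1 : Commute (T i) (T j * Ring.inverse (myD (T j))) :=
            (cT i j h).mul_right (cTDi i j h)
          have h2 : Commute (Ring.inverse (myD (T i))) (T j * Ring.inverse (myD (T j))) :=
            (ciT i j h).mul_right (cii i j h)
          exact (h1.mul_left h2).eq
      · intro i j h
        exact ((cDT i j h).mul_right (cDDi i j h)).eq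
      · intro j
        exact myT_eq hr0 (hu j) (hTn j) (hTi j)
    · rintro ⟨U, D, hUm, hUU, hDsa, hDun, hDDc, hspec, hDU, hTeq⟩
      have hUunit : ∀ i, IsUnit (U i) := fun i => ⟨⟨U i, star (U i),
        Unitary.mul_star_self_of_mem (hUm i), Unitary.star_mul_self_of_mem (hUm i)⟩, rfl⟩
      have hDn : ∀ i, ‖D i‖ ≤ 1 := fun i => my_D_norm (hDsa i) (hspec i)
      have hDin : ∀ i, ‖Ring.inverse (D i)‖ ≤ r⁻¹ :=
        fun i => my_Dinv_norm hr0 (hDsa i) (hDun i) (hspec i)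
      constructor
      · intro i j hij
        have cUU : Commute (U i) (U j) := hUU i j
        have cDU : Commute (D i) (U j) := hDU i j hij
        have cUD : Commute (U i) (D j) := (hDU j i hij.symm).symm
        have cDD : Commute (D i) (D j) := hDDc i j
        have cUsU : Commute (U i) (star (U j)) := my_commute_star_unitary (hUm j) cUU
        have cDsU : Commute (D i) (star (U j)) := my_commute_star_unitary (hUm j) cDU
        constructor
        · rw [hTeq i, hTeq j]
          exact ((cUU.mul_right cUD).mul_left (cDU.mul_right cDD)).eq
        · rw [hTeq i, hTeq j, ← ContinuousLinearMap.star_eq_adjoint, star_mul,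
            (hDsa j).star_eq]
          exact ((cUD.mul_right cUsU).mul_left (cDD.mul_right cDsU)).eq
      · intro i
        refine ⟨hu i, ?_, ?_⟩
        · rw [hTeq i, CStarRing.norm_mem_unitary_mul _ (hUm i)]
          exact hDn i
        · have hinv : Ring.inverse (T i) = Ring.inverse (D i) * star (U i) := by
            rw [hTeq i]
            apply my_ring_inverse_eq ((hUunit i).mul (hDun i))
            calc U i * D i * (Ring.inverse (D i) * star (U i))
                = U i * (D i * (Ring.inverse (D i) * star (U i))) := by rw [mul_assoc]
              _ = U i * (D i * Ring.inverse (D i) * star (U i)) := by rw [← mul_assoc (D i)]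
              _ = U i * star (U i) := by
                  rw [Ring.mul_inverse_cancel _ (hDun i), one_mul]
              _ = 1 := Unitary.mul_star_self_of_mem (hUm i)
          rw [hinv, norm_smul, Complex.norm_real, Real.norm_eq_abs, abs_of_pos hr0,
            CStarRing.norm_mul_mem_unitary _ (Unitary.star_mem (hUm i))]
          calc r * ‖Ring.inverse (D i)‖ ≤ r * r⁻¹ :=
                mul_le_mul_of_nonneg_left (hDin i) hr0.le
            _ = 1 := mul_inv_cancel₀ hr0.ne'
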